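/- In a coordination game with type ambiguity, for each nonempty location set L with all maps f^i : T^i → L (type to best location in L) surjective, the profile where every type plays f^i is the unique pure LEX Nash equilibrium a with L(a) = L. -/

import Mathlib

open Finset

section Coordination

variable {ι M : Type*} [Fintype ι] [DecidableEq ι] [Fintype M] [DecidableEq M]
  [Nonempty M] {τ : ι → Type*} [∀ i, Fintype (τ i)] [∀ i, Nonempty (τ i)]

/-- Utility of player `i` of type `t` choosing location `l`, when the other
players' types are `ω` and everybody plays the (pure, type-contingent) profile
`a`.  Here `val i t : M → ℝ` is an (injective, `(0,1)`-valued) utility over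
locations representing type `t`'s strict preference, so `k + val i t l`
(for `k` the number of other players met) represents the coordination
preference: meet as many players as possible, break ties by the location, and
be indifferent among all outcomes where nobody is met. -/
noncomputable def coordU (val : ∀ i, τ i → M → ℝ) (a : ∀ i, τ i → M) (i : ι)
    (t : τ i) (l : M) (ω : ∀ j, τ j) : ℝ :=
  let k := (Finset.univ.filter (fun j => j ≠ i ∧ a j (ω j) = l)).card
  if k = 0 then 0 else k + val i t l

/-- Worst-case utility of the action `l` over the possible type profiles of the
other players. -/
noncomputable def coordWorst (val : ∀ i, τ i → M → ℝ) (a : ∀ i, τ i → M) (i : ι)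
    (t : τ i) (l : M) : ℝ :=
  Finset.univ.inf' Finset.univ_nonempty (fun ω : ∀ j, τ j => coordU val a i t l ω)

/-- Best-case utility of the action `l` over the possible type profiles of the
other players. -/
noncomputable def coordBest (val : ∀ i, τ i → M → ℝ) (a : ∀ i, τ i → M) (i : ι)
    (t : τ i) (l : M) : ℝ :=
  Finset.univ.sup' Finset.univ_nonempty (fun ω : ∀ j, τ j => coordU val a i t l ω)

/-- `l` is a LEX best response of type `t` of player `i` to the profile `a`:
it maximizes the worst-case outcome, and among such maximizers the best-case
outcome. -/
def CoordLexBR (val : ∀ i, τ i → M → ℝ) (a : ∀ i, τ i → M) (i : ι) (t : τ i)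
    (l : M) : Prop :=
  (∀ l', coordWorst val a i t l' ≤ coordWorst val a i t l) ∧
  (∀ l', coordWorst val a i t l' = coordWorst val a i t l →
    coordBest val a i t l' ≤ coordBest val a i t l)

/-- A pure LEX Nash equilibrium: every type of every player LEX-best-responds. -/
def CoordLexNE (val : ∀ i, τ i → M → ℝ) (a : ∀ i, τ i → M) : Prop :=
  ∀ i t, CoordLexBR val a i t (a i t)

/-- The set of locations chosen by some type of some player in the profile `a`. -/
def Lset (a : ∀ i, τ i → M) : Set M := {l | ∃ i t, a i t = l}

/-- `l` is type `t`'s most preferred location in `L`. -/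
def IsBestIn (val : ∀ i, τ i → M → ℝ) (i : ι) (t : τ i) (L : Finset M)
    (l : M) : Prop :=
  l ∈ L ∧ ∀ l' ∈ L, val i t l' ≤ val i t l


set_option linter.unusedSectionVars false

section HelperLemmas

variable (val : ∀ i, τ i → M → ℝ) (a : ∀ i, τ i → M)

lemma coordU_eq (i : ι) (t : τ i) (l : M) (ω : ∀ j, τ j) :
    coordU val a i t l ω =
      if (univ.filter fun j => j ≠ i ∧ a j (ω j) = l).card = 0 then 0
      else (univ.filter fun j => j ≠ i ∧ a j (ω j) = l).card + val i t l := rfl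

lemma coordU_nonneg (hval : ∀ i t l, 0 < val i t l) (i : ι) (t : τ i) (l : M)
    (ω : ∀ j, τ j) : 0 ≤ coordU val a i t l ω := by
  rw [coordU_eq]
  split_ifs with h
  · exact le_refl 0
  · have h1 : (0:ℝ) ≤ ((univ.filter fun j => j ≠ i ∧ a j (ω j) = l).card : ℝ) :=
      Nat.cast_nonneg _
    linarith [hval i t l]

lemma coordWorst_le_coordU (i : ι) (t : τ i) (l : M) (ω : ∀ j, τ j) :
    coordWorst val a i t l ≤ coordU val a i t l ω :=
  Finset.inf'_le _ (Finset.mem_univ ω)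

lemma le_coordWorst (i : ι) (t : τ i) (l : M) {c : ℝ}
    (h : ∀ ω, c ≤ coordU val a i t l ω) : c ≤ coordWorst val a i t l :=
  Finset.le_inf' _ _ (fun ω _ => h ω)

lemma coordU_le_coordBest (i : ι) (t : τ i) (l : M) (ω : ∀ j, τ j) :
    coordU val a i t l ω ≤ coordBest val a i t l :=
  Finset.le_sup' _ (Finset.mem_univ ω)

lemma coordBest_le (i : ι) (t : τ i) (l : M) {c : ℝ}
    (h : ∀ ω, coordU val a i t l ω ≤ c) : coordBest val a i t l ≤ c :=
  Finset.sup'_le _ _ (fun ω _ => h ω)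

lemma coordWorst_nonneg (hval : ∀ i t l, 0 < val i t l) (i : ι) (t : τ i) (l : M) :
    0 ≤ coordWorst val a i t l :=
  le_coordWorst val a i t l (fun ω => coordU_nonneg val a hval i t l ω)

/-- If every other player has a type avoiding `l`, the worst case is `0`. -/
lemma coordWorst_eq_zero (hval : ∀ i t l, 0 < val i t l) (i : ι) (t : τ i) (l : M)
    (h : ∀ j, j ≠ i → ∃ s : τ j, a j s ≠ l) :
    coordWorst val a i t l = 0 := by
  refine le_antisymm ?_ (coordWorst_nonneg val a hval i t l)
  set ω : ∀ j, τ j := fun j => if hj : ∃ s : τ j, a j s ≠ l then hj.choose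
    else Classical.arbitrary _ with hω
  have hU : coordU val a i t l ω = 0 := by
    rw [coordU_eq]
    have hempty : (univ.filter fun j => j ≠ i ∧ a j (ω j) = l) = ∅ := by
      refine Finset.filter_eq_empty_iff.mpr ?_
      intro j _
      rintro ⟨hji, hjl⟩
      have hj : ∃ s : τ j, a j s ≠ l := h j hji
      have : a j (ω j) ≠ l := by
        rw [hω]; simp only [dif_pos hj]; exact hj.choose_spec
      exact this hjl
    rw [hempty]
    simp
  calc coordWorst val a i t l ≤ coordU val a i t l ω := coordWorst_le_coordU val a i t l ω
    _ = 0 := hU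

/-- Exact formula for the best case. -/
lemma coordBest_eq (hval : ∀ i t l, 0 < val i t l) (i : ι) (t : τ i) (l : M) :
    coordBest val a i t l =
      if (univ.filter fun j => j ≠ i ∧ ∃ s, a j s = l).card = 0 then 0
      else (univ.filter fun j => j ≠ i ∧ ∃ s, a j s = l).card + val i t l := by
  set K := (univ.filter fun j => j ≠ i ∧ ∃ s, a j s = l).card with hK
  refine le_antisymm ?_ ?_
  · refine coordBest_le val a i t l (fun ω => ?_)
    rw [coordU_eq]
    have hsub : (univ.filter fun j => j ≠ i ∧ a j (ω j) = l) ⊆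
        (univ.filter fun j => j ≠ i ∧ ∃ s, a j s = l) := by
      intro j hj
      simp only [Finset.mem_filter] at *
      exact ⟨hj.1, hj.2.1, ⟨ω j, hj.2.2⟩⟩
    have hcard : (univ.filter fun j => j ≠ i ∧ a j (ω j) = l).card ≤ K :=
      Finset.card_le_card hsub
    split_ifs with h1 h2 h2
    · exact le_refl 0
    · have h1 : (0:ℝ) ≤ (K : ℝ) := Nat.cast_nonneg _
      linarith [hval i t l]
    · omega
    · exact add_le_add (Nat.cast_le.mpr hcard) le_rfl
  · set ω : ∀ j, τ j := fun j => if hj : ∃ s : τ j, a j s = l then hj.choose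
      else Classical.arbitrary _ with hω
    have hfe : (univ.filter fun j => j ≠ i ∧ a j (ω j) = l)
        = (univ.filter fun j => j ≠ i ∧ ∃ s, a j s = l) := by
      apply Finset.filter_congr
      intro j _
      constructor
      · rintro ⟨hji, hjl⟩; exact ⟨hji, ⟨ω j, hjl⟩⟩
      · rintro ⟨hji, hj⟩
        refine ⟨hji, ?_⟩
        rw [hω]; simp only [dif_pos hj]; exact hj.choose_spec
    have hU : coordU val a i t l ω =
        if K = 0 then 0 else K + val i t l := by
      rw [coordU_eq, hfe]
    calc (if K = 0 then (0:ℝ) else K + val i t l) = coordU val a i t l ω := hU.symm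
      _ ≤ coordBest val a i t l := coordU_le_coordBest val a i t l ω

end HelperLemmas

lemma filter_ne_and {ι : Type*} [Fintype ι] [DecidableEq ι] (i : ι) (p : ι → Prop)
    [DecidablePred p] :
    (Finset.univ.filter fun j => j ≠ i ∧ p j) = (Finset.univ.filter p).erase i := by
  ext j
  simp only [Finset.mem_filter, Finset.mem_erase, Finset.mem_univ, true_and]

section HelperLemmas2

variable {ι M : Type*} [Fintype ι] [DecidableEq ι] [Fintype M] [DecidableEq M]
  [Nonempty M] {τ : ι → Type*} [∀ i, Fintype (τ i)] [∀ i, Nonempty (τ i)]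
  (val : ∀ i, τ i → M → ℝ) (a : ∀ i, τ i → M)

lemma le_coordWorst_forced (hval : ∀ i t l, 0 < val i t l) (i : ι) (t : τ i) (l : M)
    (hne : (Finset.univ.filter fun j => j ≠ i ∧ ∀ s, a j s = l).Nonempty) :
    ((Finset.univ.filter fun j => j ≠ i ∧ ∀ s, a j s = l).card : ℝ) + val i t l ≤
      coordWorst val a i t l := by
  refine le_coordWorst val a i t l (fun ω => ?_)
  rw [coordU_eq]
  have hsub : (Finset.univ.filter fun j => j ≠ i ∧ ∀ s, a j s = l) ⊆
      (Finset.univ.filter fun j => j ≠ i ∧ a j (ω j) = l) := by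
    intro j hj
    simp only [Finset.mem_filter] at *
    exact ⟨hj.1, hj.2.1, hj.2.2 (ω j)⟩
  have hcard := Finset.card_le_card hsub
  have hpos : 0 < (Finset.univ.filter fun j => j ≠ i ∧ ∀ s, a j s = l).card :=
    Finset.card_pos.mpr hne
  split_ifs with h
  · exfalso; omega
  · exact add_le_add (Nat.cast_le.mpr hcard) le_rfl

lemma coordWorst_le_forced (i : ι) (t : τ i) (l : M) :
    coordWorst val a i t l ≤
      if (Finset.univ.filter fun j => j ≠ i ∧ ∀ s, a j s = l).card = 0 then 0
      else (Finset.univ.filter fun j => j ≠ i ∧ ∀ s, a j s = l).card + val i t l := by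
  set ω : ∀ j, τ j := fun j => if hj : ∃ s : τ j, a j s ≠ l then hj.choose
    else Classical.arbitrary _ with hω
  have hfe : (Finset.univ.filter fun j => j ≠ i ∧ a j (ω j) = l)
      = (Finset.univ.filter fun j => j ≠ i ∧ ∀ s, a j s = l) := by
    apply Finset.filter_congr
    intro j _
    constructor
    · rintro ⟨hji, hjl⟩
      refine ⟨hji, fun s => ?_⟩
      by_contra hs
      have hj : ∃ s : τ j, a j s ≠ l := ⟨s, hs⟩
      have : a j (ω j) ≠ l := by rw [hω]; simp only [dif_pos hj]; exact hj.choose_spec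
      exact this hjl
    · rintro ⟨hji, hj⟩; exact ⟨hji, hj (ω j)⟩
  calc coordWorst val a i t l ≤ coordU val a i t l ω := coordWorst_le_coordU val a i t l ω
    _ ≤ _ := by rw [coordU_eq, hfe]

end HelperLemmas2

set_option maxHeartbeats 1000000 in
/-- In a coordination game with type ambiguity (with at least two players), for
a nonempty location set `L` such that every player's best-location map
`f^i : T^i → L` is onto `L`, the profile in which every type plays its best
location in `L` is the *unique* pure LEX Nash equilibrium `a` with
`L(a) = L`. -/
theorem stmt12 (val : ∀ i, τ i → M → ℝ)
    (hι : 1 < Fintype.card ι)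
    (hinj : ∀ i (t : τ i), Function.Injective (val i t))
    (hrange : ∀ i (t : τ i) (l : M), 0 < val i t l ∧ val i t l < 1)
    (L : Finset M) (hL : L.Nonempty)
    (honto : ∀ i, ∀ l ∈ L, ∃ t : τ i, IsBestIn val i t L l) :
    (∀ a : ∀ i, τ i → M, (∀ i (t : τ i), IsBestIn val i t L (a i t)) →
      CoordLexNE val a ∧ Lset a = ↑L) ∧
    (∀ b : ∀ i, τ i → M, CoordLexNE val b → Lset b = ↑L →
      ∀ i (t : τ i), IsBestIn val i t L (b i t)) := by
  classical
  have hval0 : ∀ i t l, 0 < val i t l := fun i t l => (hrange i t l).1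
  have hval1 : ∀ i t l, val i t l < 1 := fun i t l => (hrange i t l).2
  have hιne : Nonempty ι := Fintype.card_pos_iff.mp (by omega)
  have hbu : ∀ i (t : τ i) (l₁ l₂ : M), IsBestIn val i t L l₁ → IsBestIn val i t L l₂ →
      l₁ = l₂ := by
    intro i t l₁ l₂ h₁ h₂
    exact hinj i t (le_antisymm (h₂.2 _ h₁.1) (h₁.2 _ h₂.1))
  have hcard_ne : ∀ i : ι, (univ.filter fun j => j ≠ i).card = Fintype.card ι - 1 := by
    intro i
    rw [Finset.filter_ne' univ i, Finset.card_erase_of_mem (Finset.mem_univ i),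
      Finset.card_univ]
  have hn1 : Fintype.card ι - 1 ≠ 0 := by omega
  have hn1R : (1:ℝ) ≤ ((Fintype.card ι - 1 : ℕ) : ℝ) := by
    exact_mod_cast Nat.one_le_iff_ne_zero.mpr hn1
  constructor
  · -- existence part
    intro a ha
    have haL : ∀ i t, a i t ∈ L := fun i t => (ha i t).1
    have himg : ∀ i, ∀ l ∈ L, ∃ t, a i t = l := by
      intro i l hl
      obtain ⟨t, ht⟩ := honto i l hl
      exact ⟨t, hbu i t _ _ (ha i t) ht⟩
    have hLset : Lset a = ↑L := by
      ext l
      constructor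
      · rintro ⟨i, t, rfl⟩
        exact Finset.mem_coe.mpr (haL i t)
      · intro hl
        obtain ⟨t, ht⟩ := himg (Classical.arbitrary ι) l (Finset.mem_coe.mp hl)
        exact ⟨_, t, ht⟩
    refine ⟨?_, hLset⟩
    intro i t
    by_cases hL2 : 1 < L.card
    · -- |L| ≥ 2 : all worst cases are 0
      have hw0 : ∀ l, coordWorst val a i t l = 0 := by
        intro l
        refine coordWorst_eq_zero val a hval0 i t l (fun j _ => ?_)
        obtain ⟨l', hl'L, hl'⟩ := Finset.exists_mem_ne hL2 l
        obtain ⟨s, hs⟩ := himg j l' hl'L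
        exact ⟨s, by rw [hs]; exact hl'⟩
      have hbestL : ∀ l ∈ L, coordBest val a i t l =
          ((Fintype.card ι - 1 : ℕ) : ℝ) + val i t l := by
        intro l hl
        rw [coordBest_eq val a hval0 i t l]
        have hfe : (univ.filter fun j => j ≠ i ∧ ∃ s, a j s = l)
            = univ.filter fun j => j ≠ i := by
          apply Finset.filter_congr
          intro j _
          exact ⟨fun h => h.1, fun h => ⟨h, himg j l hl⟩⟩
        rw [hfe, hcard_ne i, if_neg hn1]
      have hbest0 : ∀ l, l ∉ L → coordBest val a i t l = 0 := by
        intro l hl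
        rw [coordBest_eq val a hval0 i t l]
        have hfe : (univ.filter fun j => j ≠ i ∧ ∃ s, a j s = l) = ∅ := by
          refine Finset.filter_eq_empty_iff.mpr ?_
          rintro j _ ⟨_, s, hs⟩
          exact hl (hs ▸ haL j s)
        rw [hfe]
        simp
      refine ⟨fun l' => by rw [hw0, hw0], fun l' _ => ?_⟩
      by_cases hl' : l' ∈ L
      · rw [hbestL l' hl', hbestL _ (haL i t)]
        have := (ha i t).2 l' hl'
        linarith
      · rw [hbest0 l' hl', hbestL _ (haL i t)]
        linarith [hval0 i t (a i t)]
    · -- |L| = 1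
      have hcard1 : L.card = 1 := le_antisymm (not_lt.mp hL2) hL.card_pos
      obtain ⟨l0, hl0⟩ := Finset.card_eq_one.mp hcard1
      subst hl0
      have hall : ∀ j (s : τ j), a j s = l0 := fun j s => Finset.mem_singleton.mp (haL j s)
      have hUc : ∀ l (ω : ∀ j, τ j), coordU val a i t l ω =
          if l = l0 then ((Fintype.card ι - 1 : ℕ) : ℝ) + val i t l0 else 0 := by
        intro l ω
        rw [coordU_eq]
        by_cases hl : l = l0
        · rw [if_pos hl]
          have hfe : (univ.filter fun j => j ≠ i ∧ a j (ω j) = l)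
              = univ.filter fun j => j ≠ i := by
            apply Finset.filter_congr
            intro j _
            exact ⟨fun h => h.1, fun h => ⟨h, (hall j (ω j)).trans hl.symm⟩⟩
          rw [hfe, hcard_ne i, if_neg hn1, hl]
        · have hfe : (univ.filter fun j => j ≠ i ∧ a j (ω j) = l) = ∅ := by
            refine Finset.filter_eq_empty_iff.mpr ?_
            rintro j _ ⟨_, hj⟩
            exact hl (hj.symm.trans (hall j (ω j)))
          rw [hfe]
          simp [hl]
      have hWc : ∀ l, coordWorst val a i t l =
          if l = l0 then ((Fintype.card ι - 1 : ℕ) : ℝ) + val i t l0 else 0 := by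
        intro l
        have h1 : coordWorst val a i t l = Finset.univ.inf' Finset.univ_nonempty
            (fun _ : ∀ j, τ j =>
              if l = l0 then ((Fintype.card ι - 1 : ℕ) : ℝ) + val i t l0 else 0) := by
          unfold coordWorst
          congr 1
          exact funext (hUc l)
        rw [h1, Finset.inf'_const]
      have hBc : ∀ l, coordBest val a i t l =
          if l = l0 then ((Fintype.card ι - 1 : ℕ) : ℝ) + val i t l0 else 0 := by
        intro l
        have h1 : coordBest val a i t l = Finset.univ.sup' Finset.univ_nonempty
            (fun _ : ∀ j, τ j =>
              if l = l0 then ((Fintype.card ι - 1 : ℕ) : ℝ) + val i t l0 else 0) := by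
          unfold coordBest
          congr 1
          exact funext (hUc l)
        rw [h1, Finset.sup'_const]
      rw [hall i t]
      constructor
      · intro l'
        rw [hWc, hWc, if_pos rfl]
        split_ifs with h
        · exact le_refl _
        · linarith [hval0 i t l0]
      · intro l' hw
        rw [hWc, hWc, if_pos rfl] at hw
        rw [hBc, hBc, if_pos rfl]
        split_ifs with h
        · exact le_refl _
        · rw [if_neg h] at hw
          linarith [hval0 i t l0]
  · -- uniqueness part
    intro b hNE hLb i t
    have hbL : ∀ j (s : τ j), b j s ∈ L := by
      intro j s
      have h1 : b j s ∈ Lset b := ⟨j, s, rfl⟩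
      rw [hLb] at h1
      exact Finset.mem_coe.mp h1
    have hLb' : ∀ l ∈ L, ∃ j s, b j s = l := by
      intro l hl
      have h1 : l ∈ Lset b := by rw [hLb]; exact Finset.mem_coe.mpr hl
      exact h1
    by_cases hL2 : 1 < L.card
    swap
    · -- singleton L
      have hcard1 : L.card = 1 := le_antisymm (not_lt.mp hL2) hL.card_pos
      obtain ⟨l0, hl0⟩ := Finset.card_eq_one.mp hcard1
      refine ⟨hbL i t, ?_⟩
      intro l' hl'
      rw [hl0, Finset.mem_singleton] at hl'
      have h2 : b i t = l0 := by
        have := hbL i t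
        rw [hl0, Finset.mem_singleton] at this
        exact this
      rw [hl', h2]
    -- main case : 1 < L.card
    -- Step 1 : no player is constant
    have havoid : ∀ (j : ι) (l : M), ∃ s : τ j, b j s ≠ l := by
      by_contra hcon
      push_neg at hcon
      obtain ⟨j0, c0, hc0⟩ := hcon
      have hkey : ∀ (i' : ι) (c : M), (∀ s, b i' s = c) →
          ∀ l, l ≠ c → 0 < (univ.filter fun j => ∀ s, b j s = l).card →
          (univ.filter fun j => ∀ s, b j s = l).card <
            (univ.filter fun j => ∀ s, b j s = c).card := by
        intro i' c hc l hlc hNl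
        have t' : τ i' := Classical.arbitrary _
        have hfl : (univ.filter fun j => j ≠ i' ∧ ∀ s, b j s = l)
            = univ.filter (fun j => ∀ s, b j s = l) := by
          apply Finset.filter_congr
          intro j _
          constructor
          · exact fun h => h.2
          · intro h
            refine ⟨?_, h⟩
            rintro rfl
            exact hlc ((h (Classical.arbitrary _)).symm.trans (hc (Classical.arbitrary _)))
        have hne : (univ.filter fun j => j ≠ i' ∧ ∀ s, b j s = l).Nonempty := by
          rw [hfl]; exact Finset.card_pos.mp hNl
        have hW1 : ((univ.filter fun j => ∀ s, b j s = l).card : ℝ) + val i' t' l ≤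
            coordWorst val b i' t' l := by
          have h2 := le_coordWorst_forced val b hval0 i' t' l hne
          rw [hfl] at h2
          exact h2
        have hi'mem : i' ∈ univ.filter (fun j => ∀ s, b j s = c) :=
          Finset.mem_filter.mpr ⟨Finset.mem_univ _, hc⟩
        have hcardc : (univ.filter fun j => j ≠ i' ∧ ∀ s, b j s = c).card =
            (univ.filter (fun j => ∀ s, b j s = c)).card - 1 := by
          rw [filter_ne_and, Finset.card_erase_of_mem hi'mem]
        have hW2 := coordWorst_le_forced val b i' t' c
        rw [hcardc] at hW2
        have hNE' := (hNE i' t').1 l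
        rw [hc t'] at hNE'
        have hNc1 : 1 ≤ (univ.filter (fun j => ∀ s, b j s = c)).card :=
          Finset.card_pos.mpr ⟨i', hi'mem⟩
        have hNlR : (1:ℝ) ≤ ((univ.filter fun j => ∀ s, b j s = l).card : ℝ) := by
          exact_mod_cast hNl
        by_cases hz : (univ.filter (fun j => ∀ s, b j s = c)).card - 1 = 0
        · rw [if_pos hz] at hW2
          exfalso
          linarith [hval0 i' t' l]
        · rw [if_neg hz] at hW2
          have hcast : (((univ.filter (fun j => ∀ s, b j s = c)).card - 1 : ℕ) : ℝ) =
              ((univ.filter (fun j => ∀ s, b j s = c)).card : ℝ) - 1 := by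
            rw [Nat.cast_sub hNc1]
            norm_num
          rw [hcast] at hW2
          have hfin : ((univ.filter fun j => ∀ s, b j s = l).card : ℝ) <
              ((univ.filter (fun j => ∀ s, b j s = c)).card : ℝ) := by
            linarith [hval0 i' t' l, hval1 i' t' c]
          exact_mod_cast hfin
      have hsame : ∀ (j : ι) (c : M), (∀ s, b j s = c) → c = c0 := by
        intro j c hc
        by_contra hne
        have hNc0pos : 0 < (univ.filter fun j' => ∀ s, b j' s = c0).card :=
          Finset.card_pos.mpr ⟨j0, Finset.mem_filter.mpr ⟨Finset.mem_univ _, hc0⟩⟩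
        have hNcpos : 0 < (univ.filter fun j' => ∀ s, b j' s = c).card :=
          Finset.card_pos.mpr ⟨j, Finset.mem_filter.mpr ⟨Finset.mem_univ _, hc⟩⟩
        have h1 := hkey j c hc c0 (fun h => hne h.symm) hNc0pos
        have h2 := hkey j0 c0 hc0 c hne hNcpos
        omega
      have hallc : ∀ (j : ι) (s : τ j), b j s = c0 := by
        intro j s
        by_cases hjj : j = j0
        · subst hjj; exact hc0 s
        · have hnej : (univ.filter fun j' => j' ≠ j ∧ ∀ s', b j' s' = c0).Nonempty :=
            ⟨j0, Finset.mem_filter.mpr ⟨Finset.mem_univ _, fun h => hjj h.symm, hc0⟩⟩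
          have hWc0 : (0:ℝ) < coordWorst val b j s c0 := by
            have h3 := le_coordWorst_forced val b hval0 j s c0 hnej
            have hpos : 0 < (univ.filter fun j' => j' ≠ j ∧ ∀ s', b j' s' = c0).card :=
              Finset.card_pos.mpr hnej
            have hposR : (1:ℝ) ≤
                ((univ.filter fun j' => j' ≠ j ∧ ∀ s', b j' s' = c0).card : ℝ) := by
              exact_mod_cast hpos
            linarith [hval0 j s c0]
          have hNEj := (hNE j s).1 c0
          have hWbs : 0 < coordWorst val b j s (b j s) := lt_of_lt_of_le hWc0 hNEj
          by_contra hbs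
          have h4 : ¬ ∀ j', j' ≠ j → ∃ s', b j' s' ≠ b j s := by
            intro hav
            rw [coordWorst_eq_zero val b hval0 j s (b j s) hav] at hWbs
            exact lt_irrefl _ hWbs
          push_neg at h4
          obtain ⟨j', _, hj'c⟩ := h4
          exact hbs (hsame j' (b j s) hj'c)
      obtain ⟨l1, hl1L, hl1ne⟩ := Finset.exists_mem_ne hL2 c0
      obtain ⟨j, s, hjs⟩ := hLb' l1 hl1L
      exact hl1ne (hjs.symm.trans (hallc j s))
    -- Step 2 : all worst cases are 0
    have hw0 : ∀ (i' : ι) (t' : τ i') l, coordWorst val b i' t' l = 0 := fun i' t' l =>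
      coordWorst_eq_zero val b hval0 i' t' l (fun j _ => havoid j l)
    have hcmp : ∀ (i' : ι) (t' : τ i') l,
        coordBest val b i' t' l ≤ coordBest val b i' t' (b i' t') :=
      fun i' t' l => (hNE i' t').2 l (by rw [hw0, hw0])
    -- Step 3 : counting
    have hklt : ∀ (i' : ι) (t' : τ i') l,
        (univ.filter fun j => j ≠ i' ∧ ∃ s, b j s = l).card ≤
        (univ.filter fun j => j ≠ i' ∧ ∃ s, b j s = b i' t').card := by
      intro i' t' l
      by_contra hgt
      push_neg at hgt
      have hc := hcmp i' t' l
      rw [coordBest_eq val b hval0 i' t' l, coordBest_eq val b hval0 i' t' (b i' t')] at hc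
      rw [if_neg (by omega : ¬ (univ.filter fun j => j ≠ i' ∧ ∃ s, b j s = l).card = 0)]
        at hc
      have hcast : ((univ.filter fun j => j ≠ i' ∧ ∃ s, b j s = b i' t').card : ℝ) + 1 ≤
          ((univ.filter fun j => j ≠ i' ∧ ∃ s, b j s = l).card : ℝ) := by
        exact_mod_cast hgt
      split_ifs at hc with h2
      · linarith [hval0 i' t' l,
          (Nat.cast_nonneg (univ.filter fun j => j ≠ i' ∧ ∃ s, b j s = b i' t').card : (0:ℝ) ≤ _)]
      · linarith [hval0 i' t' l, hval1 i' t' (b i' t')]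
    have hfull : ∀ l ∈ L, ∀ i' : ι, ∃ s, b i' s = l := by
      intro l hl i'
      by_contra hno
      obtain ⟨j, s, hjs⟩ := hLb' l hl
      have t0 : τ i' := Classical.arbitrary _
      have h1 := hklt i' t0 l
      have h2 := hklt j s (b i' t0)
      rw [hjs] at h2
      have hkP : ∀ (i'' : ι) (l' : M),
          (univ.filter fun j' => j' ≠ i'' ∧ ∃ s', b j' s' = l').card =
          ((univ.filter fun j' => ∃ s', b j' s' = l').erase i'').card := by
        intro i'' l'
        rw [filter_ne_and]
      have hi'no : i' ∉ univ.filter fun j' => ∃ s', b j' s' = l :=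
        fun hm => hno (Finset.mem_filter.mp hm).2
      have hi'yes : i' ∈ univ.filter fun j' => ∃ s', b j' s' = b i' t0 :=
        Finset.mem_filter.mpr ⟨Finset.mem_univ _, ⟨t0, rfl⟩⟩
      have hjyes : j ∈ univ.filter fun j' => ∃ s', b j' s' = l :=
        Finset.mem_filter.mpr ⟨Finset.mem_univ _, ⟨s, hjs⟩⟩
      have e1 : (univ.filter fun j' => j' ≠ i' ∧ ∃ s', b j' s' = l).card =
          (univ.filter fun j' => ∃ s', b j' s' = l).card := by
        rw [hkP, Finset.erase_eq_of_notMem hi'no]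
      have e2 : (univ.filter fun j' => j' ≠ i' ∧ ∃ s', b j' s' = b i' t0).card =
          (univ.filter fun j' => ∃ s', b j' s' = b i' t0).card - 1 := by
        rw [hkP, Finset.card_erase_of_mem hi'yes]
      have e3 : (univ.filter fun j' => j' ≠ j ∧ ∃ s', b j' s' = l).card =
          (univ.filter fun j' => ∃ s', b j' s' = l).card - 1 := by
        rw [hkP, Finset.card_erase_of_mem hjyes]
      have e4 : (univ.filter fun j' => ∃ s', b j' s' = b i' t0).card - 1 ≤
          (univ.filter fun j' => j' ≠ j ∧ ∃ s', b j' s' = b i' t0).card := by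
        rw [hkP]
        have := Finset.pred_card_le_card_erase
          (s := univ.filter fun j' => ∃ s', b j' s' = b i' t0) (a := j)
        exact this
      have hp1 : 0 < (univ.filter fun j' => ∃ s', b j' s' = b i' t0).card :=
        Finset.card_pos.mpr ⟨i', hi'yes⟩
      have hp2 : 0 < (univ.filter fun j' => ∃ s', b j' s' = l).card :=
        Finset.card_pos.mpr ⟨j, hjyes⟩
      omega
    -- conclusion
    refine ⟨hbL i t, ?_⟩
    intro l' hl'
    have hc := hcmp i t l'
    rw [coordBest_eq val b hval0 i t l', coordBest_eq val b hval0 i t (b i t)] at hc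
    have hcardL : ∀ l'' ∈ L, (univ.filter fun j => j ≠ i ∧ ∃ s, b j s = l'')
        = univ.filter fun j => j ≠ i := by
      intro l'' hl''
      apply Finset.filter_congr
      intro j _
      exact ⟨fun h => h.1, fun h => ⟨h, hfull l'' hl'' j⟩⟩
    rw [hcardL l' hl', hcardL (b i t) (hbL i t), hcard_ne i, if_neg hn1, if_neg hn1] at hc
    linarith


end Coordination
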